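/- arXiv:0810.4389 — 4 statements merged into one kernel-verified Lean document; each statement's English description precedes it below -/
import Mathlib

section
/- In any Gauss word, the number of odd-parity letters is even, where a letter A of a Gauss word of the form xAyAz has odd parity if the word y has odd length. -/
/-- A word is a finite sequence of letters; we take the letters to be natural numbers. -/
abbrev Word := List ℕ

/-- An `n`-component phrase: an `n`-tuple of words. -/
abbrev Phrase (n : ℕ) := Fin n → Word

/-- The concatenation of all the components of a phrase. -/
def totalWord {n : ℕ} (p : Phrase n) : Word := (List.ofFn p).flatten

/-- A Gauss word: every letter that appears does so exactly twice. -/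
def IsGaussWord (w : Word) : Prop := ∀ a ∈ w, w.count a = 2

/-- A Gauss phrase: the concatenation of the components is a Gauss word. -/
def IsGaussPhrase {n : ℕ} (p : Phrase n) : Prop := IsGaussWord (totalWord p)

/-- The phrase written as a single word with separators (`none`) between components. -/
def sepWord {n : ℕ} (p : Phrase n) : List (Option ℕ) :=
  List.intercalate [none] (List.ofFn fun i => (p i).map some)

/-- A single open homotopy move: isomorphism, H1, H2 or H3.  Adjacency of two letters
in `sepWord p` means exactly that they are adjacent inside a single component. -/
inductive OpenMove {n : ℕ} : Phrase n → Phrase n → Prop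
  | iso (p : Phrase n) (f : ℕ → ℕ) (hf : Function.Bijective f) :
      OpenMove p (fun i => (p i).map f)
  | h1 (p q : Phrase n) (A : ℕ) (x y : List (Option ℕ))
      (hA : some A ∉ x ++ y)
      (hp : sepWord p = x ++ some A :: some A :: y)
      (hq : sepWord q = x ++ y) : OpenMove p q
  | h2 (p q : Phrase n) (A B : ℕ) (x y z : List (Option ℕ))
      (hAB : A ≠ B)
      (hA : some A ∉ x ++ y ++ z) (hB : some B ∉ x ++ y ++ z)
      (hp : sepWord p = x ++ some A :: some B :: (y ++ some B :: some A :: z))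
      (hq : sepWord q = x ++ y ++ z) : OpenMove p q
  | h3 (p q : Phrase n) (A B C : ℕ) (w x y z : List (Option ℕ))
      (hAB : A ≠ B) (hAC : A ≠ C) (hBC : B ≠ C)
      (hA : some A ∉ w ++ x ++ y ++ z) (hB : some B ∉ w ++ x ++ y ++ z)
      (hC : some C ∉ w ++ x ++ y ++ z)
      (hp : sepWord p =
        w ++ some A :: some B :: (x ++ some A :: some C :: (y ++ some B :: some C :: z)))
      (hq : sepWord q =
        w ++ some B :: some A :: (x ++ some C :: some A :: (y ++ some C :: some B :: z))) :
      OpenMove p q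

/-- The shift move: move the first letter of a component to its end. -/
inductive ShiftMove {n : ℕ} : Phrase n → Phrase n → Prop
  | shift (p : Phrase n) (k : Fin n) (A : ℕ) (y : Word) (hp : p k = A :: y) :
      ShiftMove p (Function.update p k (y ++ [A]))

/-- Open homotopy: the equivalence relation generated by isomorphisms and the
moves H1, H2, H3 (and their inverses). -/
def OpenHomotopic {n : ℕ} (p q : Phrase n) : Prop :=
  Relation.EqvGen (@OpenMove n) p q

/-- Homotopy: the equivalence relation generated by isomorphisms, shift moves and the
moves H1, H2, H3 (and their inverses). -/
def Homotopic {n : ℕ} (p q : Phrase n) : Prop :=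
  Relation.EqvGen (fun a b => OpenMove a b ∨ ShiftMove a b) p q

/-- The linking matrix of a phrase: the `(i,j)` entry, for `i ≠ j`, is the number
modulo 2 of (two-component) letters with one occurrence in component `i` and the
other occurrence in component `j`; the diagonal entries are `0`. -/
def linkingMatrix {n : ℕ} (p : Phrase n) : Matrix (Fin n) (Fin n) (ZMod 2) :=
  Matrix.of fun i j =>
    if i = j then 0
    else (((totalWord p).toFinset.filter
        fun a => (p i).count a = 1 ∧ (p j).count a = 1).card : ZMod 2)

/-- The subword strictly between the two occurrences of the letter `a` in `w`
(for a letter occurring exactly twice in `w`). -/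
def betweenWord (w : Word) (a : ℕ) : Word :=
  (w.drop (w.idxOf a + 1)).takeWhile fun b => b ≠ a

/-- Fukunaga's `T` invariant: `Tk p k` is the number, modulo 2, of odd-parity
single-component letters in the `k`-th component of `p`. -/
def Tk {n : ℕ} (p : Phrase n) (k : Fin n) : ZMod 2 :=
  (((p k).toFinset.filter
      fun a => (p k).count a = 2 ∧ Odd (betweenWord (p k) a).length).card : ZMod 2)

/-- The linking vector of a subword `w` of the `k`-th component of `p`: the `i`-th entry
is the number modulo 2 of letters occurring exactly once in `w` whose other occurrence
lies in the `i`-th component of `p`. -/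
def linkVec {n : ℕ} (p : Phrase n) (k : Fin n) (w : Word) : Fin n → ZMod 2 :=
  fun i =>
    ((w.toFinset.filter fun a => w.count a = 1 ∧
        (if i = k then (p k).count a = 2 else a ∈ p i)).card : ZMod 2)

/-- The linking vector of a single-component letter `a` of the `k`-th component:
the linking vector of the word between its two occurrences. -/
def letterVec {n : ℕ} (p : Phrase n) (k : Fin n) (a : ℕ) : Fin n → ZMod 2 :=
  linkVec p k (betweenWord (p k) a)

/-- `Bk p k`: the set of nonzero vectors `v ∈ (ℤ/2)ⁿ` which are the linking vector of an
odd number of single-component letters of the `k`-th component of `p`. -/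
def Bk {n : ℕ} (p : Phrase n) (k : Fin n) : Finset (Fin n → ZMod 2) :=
  Finset.univ.filter fun v => v ≠ 0 ∧
    Odd (((p k).toFinset.filter fun a => (p k).count a = 2 ∧ letterVec p k a = v).card)

/-- `Ok p k`: the set of orbits of `(ℤ/2)ⁿ` under translation by the linking vector of the
`k`-th component, other than the orbit of `0`, which contain the linking vector of an odd
number of single-component letters of the `k`-th component.  An orbit is recorded as the
finite set of its elements. -/
def Ok {n : ℕ} (p : Phrase n) (k : Fin n) : Finset (Finset (Fin n → ZMod 2)) :=
  Finset.univ.filter fun O =>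
    (∃ v : Fin n → ZMod 2, O = {v, v + linkVec p k (p k)}) ∧
    (0 : Fin n → ZMod 2) ∉ O ∧
    Odd (((p k).toFinset.filter fun a => (p k).count a = 2 ∧ letterVec p k a ∈ O).card)


section AuxEven

theorem count_eq_one_split' {l : List ℕ} {a : ℕ} (h : l.count a = 1) :
    ∃ x y, l = x ++ a :: y ∧ a ∉ x ∧ a ∉ y := by
  induction l with
  | nil => simp at h
  | cons b l ih =>
    by_cases hb : a = b
    · subst hb
      refine ⟨[], l, rfl, by simp, ?_⟩
      simp [List.count_cons_self] at h
      exact List.count_eq_zero.1 h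
    · rw [List.count_cons_of_ne (by simpa using Ne.symm hb)] at h
      obtain ⟨x, y, rfl, hx, hy⟩ := ih h
      exact ⟨b :: x, y, rfl, by simp [hx, hb], hy⟩

theorem count_eq_two_split' {l : List ℕ} {a : ℕ} (h : l.count a = 2) :
    ∃ x y z, l = x ++ a :: (y ++ a :: z) ∧ a ∉ x ∧ a ∉ y ∧ a ∉ z := by
  induction l with
  | nil => simp at h
  | cons b l ih =>
    by_cases hb : a = b
    · subst hb
      rw [List.count_cons_self] at h
      obtain ⟨y, z, rfl, hy, hz⟩ := count_eq_one_split' (show l.count a = 1 by omega)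
      exact ⟨[], y, z, rfl, by simp, hy, hz⟩
    · rw [List.count_cons_of_ne (by simpa using Ne.symm hb)] at h
      obtain ⟨x, y, z, rfl, hx, hy, hz⟩ := ih h
      exact ⟨b :: x, y, z, rfl, by simp [hx, hb], hy, hz⟩

theorem takeWhile_ne_append' {y z : List ℕ} {a : ℕ} (hy : a ∉ y) :
    (y ++ a :: z).takeWhile (fun b => b ≠ a) = y := by
  induction y with
  | nil => simp
  | cons c y ih =>
    rw [List.mem_cons, not_or] at hy
    simpa [List.takeWhile_cons, Ne.symm hy.1] using ih hy.2

theorem indexOf_split' {x t : List ℕ} {a : ℕ} (hx : a ∉ x) :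
    (x ++ a :: t).idxOf a = x.length := by
  induction x with
  | nil => simp
  | cons c x ih =>
    rw [List.mem_cons, not_or] at hx
    rw [List.cons_append, List.idxOf_cons_ne _ (by simpa using Ne.symm hx.1), ih hx.2]
    rfl

theorem betweenWord_eq' {x y z : List ℕ} {a : ℕ} (hx : a ∉ x) (hy : a ∉ y) :
    betweenWord (x ++ a :: (y ++ a :: z)) a = y := by
  unfold betweenWord
  rw [indexOf_split' hx,
    show x ++ a :: (y ++ a :: z) = (x ++ [a]) ++ (y ++ a :: z) by simp,
    show x.length + 1 = (x ++ [a]).length by simp, List.drop_left]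
  exact takeWhile_ne_append' hy

theorem count_betweenWord_self (w : List ℕ) (a : ℕ) :
    (betweenWord w a).count a = 0 := by
  rw [List.count_eq_zero]
  intro hmem
  have := List.mem_takeWhile_imp hmem
  simp at this

theorem key_sym {w : List ℕ} {a b : ℕ} (hab : a ≠ b)
    (ha : w.count a = 2) (hb : w.count b = 2) :
    ((betweenWord w a).count b + (betweenWord w b).count a) % 2 = 0 := by
  obtain ⟨x, y, z, rfl, hx, hy, hz⟩ := count_eq_two_split' ha
  rw [betweenWord_eq' hx hy]
  have hba : b ≠ a := Ne.symm hab
  have hsum : x.count b + (y.count b + z.count b) = 2 := by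
    simpa [List.count_append, List.count_cons, hab, hba] using hb
  have h6 : (x.count b = 2 ∧ y.count b = 0 ∧ z.count b = 0) ∨
      (x.count b = 0 ∧ y.count b = 2 ∧ z.count b = 0) ∨
      (x.count b = 0 ∧ y.count b = 0 ∧ z.count b = 2) ∨
      (x.count b = 1 ∧ y.count b = 1 ∧ z.count b = 0) ∨
      (x.count b = 1 ∧ y.count b = 0 ∧ z.count b = 1) ∨
      (x.count b = 0 ∧ y.count b = 1 ∧ z.count b = 1) := by omega
  rcases h6 with ⟨h1, h2, h3⟩ | ⟨h1, h2, h3⟩ | ⟨h1, h2, h3⟩ | ⟨h1, h2, h3⟩ |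
      ⟨h1, h2, h3⟩ | ⟨h1, h2, h3⟩
  · -- b entirely within x
    obtain ⟨x1, x2, x3, rfl, hb1, hb2, hb3⟩ := count_eq_two_split' h1
    simp only [List.mem_append, List.mem_cons, not_or] at hx
    rw [show (x1 ++ b :: (x2 ++ b :: x3)) ++ a :: (y ++ a :: z)
        = x1 ++ b :: (x2 ++ b :: (x3 ++ a :: (y ++ a :: z))) by simp,
      betweenWord_eq' hb1 hb2]
    simp [h2, List.count_eq_zero.2 hx.2.2.1]
  · -- b entirely within y
    obtain ⟨y1, y2, y3, rfl, hb1, hb2, hb3⟩ := count_eq_two_split' h2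
    simp only [List.mem_append, List.mem_cons, not_or] at hy
    rw [show x ++ a :: ((y1 ++ b :: (y2 ++ b :: y3)) ++ a :: z)
        = (x ++ a :: y1) ++ b :: (y2 ++ b :: (y3 ++ a :: z)) by simp,
      betweenWord_eq' (by simp [List.count_eq_zero.1 h1, hba, hb1]) hb2]
    simp [List.count_append, List.count_cons, hba, List.count_eq_zero.2 hb1,
      List.count_eq_zero.2 hb2, List.count_eq_zero.2 hb3,
      List.count_eq_zero.2 hy.2.2.1]
  · -- b entirely within z
    obtain ⟨z1, z2, z3, rfl, hb1, hb2, hb3⟩ := count_eq_two_split' h3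
    simp only [List.mem_append, List.mem_cons, not_or] at hz
    rw [show x ++ a :: (y ++ a :: (z1 ++ b :: (z2 ++ b :: z3)))
        = (x ++ a :: (y ++ a :: z1)) ++ b :: (z2 ++ b :: z3) by simp,
      betweenWord_eq'
        (by simp [List.count_eq_zero.1 h1, List.count_eq_zero.1 h2, hba, hb1]) hb2]
    simp [h2, List.count_eq_zero.2 hz.2.2.1]
  · -- one occurrence in x, one in y
    obtain ⟨x1, x2, rfl, hb1, hb2⟩ := count_eq_one_split' h1
    obtain ⟨y1, y2, rfl, hb3, hb4⟩ := count_eq_one_split' h2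
    simp only [List.mem_append, List.mem_cons, not_or] at hx hy
    rw [show (x1 ++ b :: x2) ++ a :: ((y1 ++ b :: y2) ++ a :: z)
        = x1 ++ b :: ((x2 ++ a :: y1) ++ b :: (y2 ++ a :: z)) by simp,
      betweenWord_eq' hb1 (by simp [hb2, hba, hb3])]
    simp [List.count_append, List.count_cons, hba,
      List.count_eq_zero.2 hb3, List.count_eq_zero.2 hb4,
      List.count_eq_zero.2 hx.2.2, List.count_eq_zero.2 hy.1]
  · -- one occurrence in x, one in z
    obtain ⟨x1, x2, rfl, hb1, hb2⟩ := count_eq_one_split' h1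
    obtain ⟨z1, z2, rfl, hb3, hb4⟩ := count_eq_one_split' h3
    simp only [List.mem_append, List.mem_cons, not_or] at hx hz
    rw [show (x1 ++ b :: x2) ++ a :: (y ++ a :: (z1 ++ b :: z2))
        = x1 ++ b :: ((x2 ++ a :: (y ++ a :: z1)) ++ b :: z2) by simp,
      betweenWord_eq' hb1 (by simp [hb2, hba, List.count_eq_zero.1 h2, hb3])]
    simp [h2, List.count_append, List.count_cons,
      List.count_eq_zero.2 hx.2.2, List.count_eq_zero.2 hy, List.count_eq_zero.2 hz.1]
  · -- one occurrence in y, one in z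
    obtain ⟨y1, y2, rfl, hb1, hb2⟩ := count_eq_one_split' h2
    obtain ⟨z1, z2, rfl, hb3, hb4⟩ := count_eq_one_split' h3
    simp only [List.mem_append, List.mem_cons, not_or] at hy hz
    rw [show x ++ a :: ((y1 ++ b :: y2) ++ a :: (z1 ++ b :: z2))
        = (x ++ a :: y1) ++ b :: ((y2 ++ a :: z1) ++ b :: z2) by simp,
      betweenWord_eq' (by simp [List.count_eq_zero.1 h1, hba, hb1])
        (by simp [hb2, hba, hb3])]
    simp [List.count_append, List.count_cons, hba,
      List.count_eq_zero.2 hb1, List.count_eq_zero.2 hb2,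
      List.count_eq_zero.2 hy.2.2, List.count_eq_zero.2 hz.1]

theorem natCast_zmod_two (n : ℕ) : ((n : ZMod 2) = if Odd n then 1 else 0) := by
  rcases Nat.even_or_odd n with h | h
  · rw [if_neg (by simpa using h), ZMod.natCast_eq_zero_iff]
    exact h.two_dvd
  · rw [if_pos h]
    obtain ⟨k, rfl⟩ := h
    push_cast
    rw [show (2 : ZMod 2) = 0 by decide]
    ring

end AuxEven

/-- in any Gauss word, the number of odd-parity letters is even. -/
theorem even_number_of_odd_parity_letters (w : Word) (hw : IsGaussWord w) :
    Even ((w.toFinset.filter fun a => Odd (betweenWord w a).length).card) := by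
  classical
  have hc2 : ∀ a ∈ w.toFinset, w.count a = 2 := fun a ha => hw a (List.mem_toFinset.1 ha)
  rw [show Even ((w.toFinset.filter fun a => Odd (betweenWord w a).length).card)
      ↔ (((w.toFinset.filter fun a => Odd (betweenWord w a).length).card : ℕ) : ZMod 2) = 0 by
    rw [ZMod.natCast_eq_zero_iff]; exact even_iff_two_dvd]
  have h1 : (((w.toFinset.filter fun a => Odd (betweenWord w a).length).card : ℕ) : ZMod 2)
      = ∑ a ∈ w.toFinset, (((betweenWord w a).length : ℕ) : ZMod 2) := by
    rw [Finset.card_filter]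
    push_cast
    refine Finset.sum_congr rfl fun a _ => ?_
    rw [natCast_zmod_two]
  rw [h1]
  have hsub : ∀ a, (betweenWord w a).toFinset ⊆ w.toFinset := by
    intro a b hbmem
    rw [List.mem_toFinset] at *
    exact List.mem_of_mem_drop ((List.takeWhile_prefix _).subset hbmem)
  have hlen : ∀ a, (betweenWord w a).length = ∑ b ∈ w.toFinset, (betweenWord w a).count b := by
    intro a
    rw [← Finset.sum_subset (hsub a)
      (fun b _ hb => List.count_eq_zero.2 (by simpa using hb))]
    set_option linter.unnecessarySimpa false in
    simpa using (Multiset.toFinset_sum_count_eq (betweenWord w a : Multiset ℕ)).symm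
  calc ∑ a ∈ w.toFinset, (((betweenWord w a).length : ℕ) : ZMod 2)
      = ∑ p ∈ w.toFinset ×ˢ w.toFinset,
          (((betweenWord w p.1).count p.2 : ℕ) : ZMod 2) := by
        rw [Finset.sum_product]
        refine Finset.sum_congr rfl fun a _ => ?_
        rw [hlen a]
        push_cast
        rfl
    _ = 0 := by
        refine Finset.sum_involution (fun p _ => p.swap) ?_ ?_
          (fun p hp => by simpa [Finset.mem_product, and_comm] using hp) (fun p _ => rfl)
        · rintro ⟨a, b⟩ hp
          rw [Finset.mem_product] at hp
          by_cases hab : a = b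
          · subst hab
            simp [count_betweenWord_self]
          · have := key_sym hab (hc2 a hp.1) (hc2 b hp.2)
            have h2 : (2:ℕ) ∣ (betweenWord w a).count b + (betweenWord w b).count a :=
              Nat.dvd_of_mod_eq_zero this
            have := (ZMod.natCast_eq_zero_iff _ 2).2 h2
            push_cast at this
            simpa using this
        · rintro ⟨a, b⟩ _ hf hswap
          have : a = b := congrArg Prod.snd hswap
          subst this
          simp [count_betweenWord_self] at hf
end

section
/- Let n be a positive integer and, for each k from 1 to n, let B_k be a subset of (Z/2)^n \ {0} containing an even number of k-odd vectors (a vector is k-odd if its k-th entry is 1). Then there exists an n-component Gauss phrase p such that B_k(p) = B_k for every k from 1 to n. -/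
namespace SoAux

abbrev V (n : ℕ) := Fin n → ZMod 2

variable {n : ℕ}

noncomputable def code (v : V n) : ℕ := (Fintype.equivFin (V n) v).val

lemma code_inj : Function.Injective (code (n := n)) := by
  intro a b h
  exact (Fintype.equivFin (V n)).injective (Fin.val_injective h)

noncomputable def aL (k : Fin n) (v : V n) : ℕ := Nat.pair 0 (Nat.pair k.val (Nat.pair (code v) 0))
noncomputable def dL (k : Fin n) (v : V n) : ℕ := Nat.pair 1 (Nat.pair k.val (Nat.pair (code v) 0))
noncomputable def cL (k : Fin n) (v : V n) (i : Fin n) : ℕ :=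
  Nat.pair 2 (Nat.pair k.val (Nat.pair (code v) i.val))

@[simp] lemma aL_eq_aL {k k' : Fin n} {v v' : V n} : aL k v = aL k' v' ↔ k = k' ∧ v = v' := by
  simp [aL, Nat.pair_eq_pair, Fin.val_inj, code_inj.eq_iff]

@[simp] lemma dL_eq_dL {k k' : Fin n} {v v' : V n} : dL k v = dL k' v' ↔ k = k' ∧ v = v' := by
  simp [dL, Nat.pair_eq_pair, Fin.val_inj, code_inj.eq_iff]

@[simp] lemma cL_eq_cL {k k' i i' : Fin n} {v v' : V n} :
    cL k v i = cL k' v' i' ↔ k = k' ∧ v = v' ∧ i = i' := by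
  simp [cL, Nat.pair_eq_pair, Fin.val_inj, code_inj.eq_iff]

@[simp] lemma aL_ne_dL {k k' : Fin n} {v v' : V n} : aL k v ≠ dL k' v' := by
  simp [aL, dL, Nat.pair_eq_pair]
@[simp] lemma dL_ne_aL {k k' : Fin n} {v v' : V n} : dL k v ≠ aL k' v' := by
  simp [aL, dL, Nat.pair_eq_pair]
@[simp] lemma aL_ne_cL {k k' i : Fin n} {v v' : V n} : aL k v ≠ cL k' v' i := by
  simp [aL, cL, Nat.pair_eq_pair]
@[simp] lemma cL_ne_aL {k k' i : Fin n} {v v' : V n} : cL k' v' i ≠ aL k v := by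
  simp [aL, cL, Nat.pair_eq_pair]
@[simp] lemma dL_ne_cL {k k' i : Fin n} {v v' : V n} : dL k v ≠ cL k' v' i := by
  simp [dL, cL, Nat.pair_eq_pair]
@[simp] lemma cL_ne_dL {k k' i : Fin n} {v v' : V n} : cL k' v' i ≠ dL k v := by
  simp [dL, cL, Nat.pair_eq_pair]



lemma count_of_nodup {l : List ℕ} (h : l.Nodup) (a : ℕ) :
    l.count a = if a ∈ l then 1 else 0 := by
  split
  · exact List.count_eq_one_of_mem h ‹_›
  · exact List.count_eq_zero.2 ‹_›

lemma sum_ite_mem {α : Type*} [DecidableEq α] {l : List α} (hl : l.Nodup) (v : α) (c : ℕ) :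
    (l.map fun w => if v = w then c else 0).sum = if v ∈ l then c else 0 := by
  induction l with
  | nil => simp
  | cons b t ih =>
    rcases List.nodup_cons.1 hl with ⟨hb, ht⟩
    by_cases h : v = b
    · subst h
      simp [List.count_eq_zero.2 hb, ih ht, hb]
    · simp [h, Ne.symm h, ih ht]

lemma drop_indexOf {a : ℕ} : ∀ (x r : Word), a ∉ x →
    (x ++ a :: r).drop ((x ++ a :: r).idxOf a + 1) = r := by
  intro x
  induction x with
  | nil => intro r _; simp
  | cons b t ih =>
    intro r hx
    have hb : b ≠ a := fun h => hx (by simp [h])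
    rw [List.cons_append, List.idxOf_cons_ne _ hb, List.drop_succ_cons]
    exact ih r (fun h => hx (List.mem_cons_of_mem _ h))

lemma takeWhile_ne {a : ℕ} : ∀ (y z : Word), a ∉ y →
    (y ++ a :: z).takeWhile (fun b => b ≠ a) = y := by
  intro y
  induction y with
  | nil => intro z _; simp
  | cons b t ih =>
    intro z hy
    have hb : b ≠ a := fun h => hy (by simp [h])
    simp only [List.cons_append, List.takeWhile_cons]
    have h2 := ih z (fun h => hy (List.mem_cons_of_mem _ h))
    simp only [decide_not] at h2 ⊢
    simp [hb, h2]

lemma betweenWord_spec {x y z : Word} {a : ℕ} (hx : a ∉ x) (hy : a ∉ y) :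
    betweenWord (x ++ a :: (y ++ a :: z)) a = y := by
  unfold betweenWord
  rw [drop_indexOf x _ hx, takeWhile_ne y z hy]


variable (B : Fin n → Finset (V n))


noncomputable def cs (k : Fin n) (v : V n) : Word :=
  ((List.finRange n).filter fun i => decide (i ≠ k ∧ v i = 1)).map fun i => cL k v i

noncomputable def gad (k : Fin n) (v : V n) : Word :=
  aL k v :: (cs k v ++ if v k = 1 then [dL k v, aL k v, dL k v] else [aL k v])

noncomputable def tl (k : Fin n) : Word :=
  (List.finRange n).flatMap fun k' =>
    ((B k').toList.filter fun v => decide (k' ≠ k ∧ v k = 1)).map fun v => cL k' v k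

noncomputable def comp (k : Fin n) : Word := ((B k).toList.flatMap (gad k)) ++ tl B k

lemma mem_cs {a : ℕ} {k : Fin n} {v : V n} :
    a ∈ cs k v ↔ ∃ i, i ≠ k ∧ v i = 1 ∧ a = cL k v i := by
  simp only [cs, List.mem_map, List.mem_filter, List.mem_finRange, true_and,
    decide_eq_true_eq]
  constructor
  · rintro ⟨i, ⟨h1, h2⟩, h3⟩; exact ⟨i, h1, h2, h3.symm⟩
  · rintro ⟨i, h1, h2, h3⟩; exact ⟨i, ⟨h1, h2⟩, h3.symm⟩

lemma mem_gad {a : ℕ} {k : Fin n} {v : V n} :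
    a ∈ gad k v ↔ a = aL k v ∨ (v k = 1 ∧ a = dL k v) ∨ ∃ i, i ≠ k ∧ v i = 1 ∧ a = cL k v i := by
  by_cases h : v k = 1
  · constructor
    · intro hm
      simp only [gad, if_pos h, List.mem_cons, List.mem_append, List.not_mem_nil,
        or_false] at hm
      rcases hm with rfl | hm | rfl | rfl | rfl
      · exact Or.inl rfl
      · exact Or.inr (Or.inr (mem_cs.1 hm))
      · exact Or.inr (Or.inl ⟨h, rfl⟩)
      · exact Or.inl rfl
      · exact Or.inr (Or.inl ⟨h, rfl⟩)
    · intro hm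
      simp only [gad, if_pos h, List.mem_cons, List.mem_append, List.not_mem_nil,
        or_false]
      rcases hm with rfl | ⟨_, rfl⟩ | hm
      · exact Or.inl rfl
      · exact Or.inr (Or.inr (Or.inl rfl))
      · exact Or.inr (Or.inl (mem_cs.2 hm))
  · constructor
    · intro hm
      simp only [gad, if_neg h, List.mem_cons, List.mem_append, List.not_mem_nil,
        or_false] at hm
      rcases hm with rfl | hm | rfl
      · exact Or.inl rfl
      · exact Or.inr (Or.inr (mem_cs.1 hm))
      · exact Or.inl rfl
    · intro hm
      simp only [gad, if_neg h, List.mem_cons, List.mem_append, List.not_mem_nil,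
        or_false]
      rcases hm with rfl | ⟨h1, rfl⟩ | hm
      · exact Or.inl rfl
      · exact absurd h1 h
      · exact Or.inr (Or.inl (mem_cs.2 hm))

lemma mem_tl {a : ℕ} {k : Fin n} :
    a ∈ tl B k ↔ ∃ k' v, k' ≠ k ∧ v ∈ B k' ∧ v k = 1 ∧ a = cL k' v k := by
  simp only [tl, List.mem_flatMap, List.mem_map, List.mem_filter, List.mem_finRange,
    Finset.mem_toList, true_and, decide_eq_true_eq]
  constructor
  · rintro ⟨k', w, ⟨hw, h1, h2⟩, h3⟩; exact ⟨k', w, h1, hw, h2, h3.symm⟩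
  · rintro ⟨k', w, h1, hw, h2, h3⟩; exact ⟨k', w, ⟨hw, h1, h2⟩, h3.symm⟩

lemma mem_comp {a : ℕ} {k : Fin n} :
    a ∈ comp B k ↔ (∃ v ∈ B k, a ∈ gad k v) ∨ a ∈ tl B k := by
  simp [comp]


lemma cs_nodup {k : Fin n} {v : V n} : (cs k v).Nodup := by
  refine List.Nodup.map ?_ (List.Nodup.filter _ (List.nodup_finRange n))
  intro i j h
  exact (cL_eq_cL.1 h).2.2

lemma count_cs {a : ℕ} {k : Fin n} {v : V n} :
    (cs k v).count a = if a ∈ cs k v then 1 else 0 := count_of_nodup cs_nodup a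

lemma count_cs_aL {k k' : Fin n} {v v' : V n} : (cs k v).count (aL k' v') = 0 :=
  List.count_eq_zero.2 (by
    intro h; rcases mem_cs.1 h with ⟨i, _, _, he⟩; exact aL_ne_cL he)

lemma count_cs_dL {k k' : Fin n} {v v' : V n} : (cs k v).count (dL k' v') = 0 :=
  List.count_eq_zero.2 (by
    intro h; rcases mem_cs.1 h with ⟨i, _, _, he⟩; exact dL_ne_cL he)

lemma count_cs_cL {k k' i : Fin n} {v v' : V n} :
    (cs k v).count (cL k' v' i) = if k = k' ∧ v = v' ∧ i ≠ k ∧ v i = 1 then 1 else 0 := by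
  rw [count_cs]
  congr 1
  simp only [eq_iff_iff, mem_cs]
  constructor
  · rintro ⟨j, hj, hvj, he⟩
    obtain ⟨rfl, rfl, rfl⟩ := cL_eq_cL.1 he.symm
    exact ⟨rfl, rfl, hj, hvj⟩
  · rintro ⟨rfl, rfl, hik, hvi⟩
    exact ⟨i, hik, hvi, rfl⟩

lemma count_gad_aL {k k' : Fin n} {v v' : V n} :
    (gad k v).count (aL k' v') = if k = k' ∧ v = v' then 2 else 0 := by
  by_cases h : v k = 1 <;>
    by_cases h2 : k = k' ∧ v = v' <;>
      simp [gad, h, h2, List.count_cons, List.count_append, count_cs_aL, eq_comm,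
        and_comm] <;> aesop

lemma count_gad_dL {k k' : Fin n} {v v' : V n} :
    (gad k v).count (dL k' v') = if k = k' ∧ v = v' ∧ v k = 1 then 2 else 0 := by
  by_cases h : v k = 1 <;>
    by_cases h2 : k = k' ∧ v = v' <;>
      simp [gad, h, h2, List.count_cons, List.count_append, count_cs_dL, eq_comm,
        and_comm] <;> aesop

lemma count_gad_cL {k k' i : Fin n} {v v' : V n} :
    (gad k v).count (cL k' v' i) = if k = k' ∧ v = v' ∧ i ≠ k ∧ v i = 1 then 1 else 0 := by
  by_cases h : v k = 1 <;>
      simp [gad, h, List.count_cons, List.count_append, count_cs_cL]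

lemma tl_nodup {k : Fin n} : (tl B k).Nodup := by
  rw [tl, List.nodup_flatMap]
  constructor
  · intro k' _
    refine List.Nodup.map ?_ (List.Nodup.filter _ (Finset.nodup_toList _))
    intro w w' h
    exact (cL_eq_cL.1 h).2.1
  · refine List.Pairwise.imp ?_ (List.nodup_finRange n)
    intro k1 k2 hne
    intro a ha hb
    simp only [List.mem_map, List.mem_filter] at ha hb
    obtain ⟨w1, _, rfl⟩ := ha
    obtain ⟨w2, _, he⟩ := hb
    exact hne (cL_eq_cL.1 he.symm).1

lemma count_tl_aL {k k' : Fin n} {v : V n} : (tl B k').count (aL k v) = 0 :=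
  List.count_eq_zero.2 (by
    intro h; rcases (mem_tl B).1 h with ⟨k'', w, _, _, _, he⟩; exact aL_ne_cL he)

lemma count_tl_dL {k k' : Fin n} {v : V n} : (tl B k').count (dL k v) = 0 :=
  List.count_eq_zero.2 (by
    intro h; rcases (mem_tl B).1 h with ⟨k'', w, _, _, _, he⟩; exact dL_ne_cL he)

lemma count_tl_cL {k k' i : Fin n} {v : V n} :
    (tl B k').count (cL k v i) = if i = k' ∧ k ≠ k' ∧ v ∈ B k ∧ v i = 1 then 1 else 0 := by
  rw [count_of_nodup (tl_nodup B) _]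
  congr 1
  simp only [eq_iff_iff, mem_tl]
  constructor
  · rintro ⟨k'', w, h1, h2, h3, he⟩
    obtain ⟨rfl, rfl, rfl⟩ := cL_eq_cL.1 he
    exact ⟨rfl, h1, h2, h3⟩
  · rintro ⟨rfl, h1, h2, h3⟩
    exact ⟨k, v, h1, h2, h3, rfl⟩

lemma count_comp_aL {k k' : Fin n} {v : V n} :
    (comp B k').count (aL k v) = if k' = k ∧ v ∈ B k' then 2 else 0 := by
  rw [comp, List.count_append, count_tl_aL, Nat.add_zero, List.count_flatMap]
  have h1 : ((B k').toList.map (List.count (aL k v) ∘ gad k')) =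
      ((B k').toList.map fun w => if k' = k ∧ v = w then 2 else 0) := by
    refine List.map_congr_left ?_
    intro w _
    simp only [Function.comp_apply, count_gad_aL]
    by_cases hw : v = w
    · subst hw; simp
    · simp [hw, Ne.symm hw]
  rw [h1]
  by_cases hk : k' = k
  · subst hk
    simp only [true_and]
    rw [sum_ite_mem (Finset.nodup_toList _) v 2]
    simp [Finset.mem_toList]
  · simp [hk]

lemma count_comp_dL {k k' : Fin n} {v : V n} :
    (comp B k').count (dL k v) = if k' = k ∧ v ∈ B k' ∧ v k = 1 then 2 else 0 := by
  rw [comp, List.count_append, count_tl_dL, Nat.add_zero, List.count_flatMap]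
  by_cases hk : k' = k
  · subst hk
    have h1 : ((B k').toList.map (List.count (dL k' v) ∘ gad k')) =
        ((B k').toList.map fun w => if v = w then (if v k' = 1 then 2 else 0) else 0) := by
      refine List.map_congr_left ?_
      intro w _
      simp only [Function.comp_apply, count_gad_dL, true_and]
      by_cases hw : v = w
      · subst hw; simp
      · simp [hw, Ne.symm hw]
    rw [h1, sum_ite_mem (Finset.nodup_toList _) v _]
    by_cases hv : v ∈ B k' <;> by_cases h2 : v k' = 1 <;>
      simp [hv, h2, Finset.mem_toList]
  · have h1 : ((B k').toList.map (List.count (dL k v) ∘ gad k')) =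
        ((B k').toList.map fun _ => 0) := by
      refine List.map_congr_left ?_
      intro w _
      simp only [Function.comp_apply, count_gad_dL]
      simp [hk]
    rw [h1]
    simp [hk]

lemma count_comp_cL {k k' i : Fin n} {v : V n} :
    (comp B k').count (cL k v i) =
      (if k' = k ∧ v ∈ B k ∧ i ≠ k ∧ v i = 1 then 1 else 0) +
      (if i = k' ∧ k ≠ k' ∧ v ∈ B k ∧ v i = 1 then 1 else 0) := by
  rw [comp, List.count_append, count_tl_cL, List.count_flatMap]
  congr 1
  by_cases hk : k' = k
  · obtain rfl := hk
    have h1 : ((B k').toList.map (List.count (cL k' v i) ∘ gad k')) =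
        ((B k').toList.map fun w => if v = w then (if i ≠ k' ∧ v i = 1 then 1 else 0) else 0) := by
      refine List.map_congr_left ?_
      intro w _
      simp only [Function.comp_apply, count_gad_cL, true_and]
      by_cases hw : v = w
      · subst hw; simp
      · simp [hw, Ne.symm hw]
    rw [h1, sum_ite_mem (Finset.nodup_toList _) v _]
    by_cases hv : v ∈ B k' <;> by_cases h2 : i ≠ k' ∧ v i = 1 <;>
      simp [hv, h2, Finset.mem_toList] <;> tauto
  · have h1 : ((B k').toList.map (List.count (cL k v i) ∘ gad k')) =
        ((B k').toList.map fun _ => 0) := by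
      refine List.map_congr_left ?_
      intro w _
      simp only [Function.comp_apply, count_gad_cL]
      simp [fun h : k' = k => hk h]
    rw [h1]
    simp [fun h : k' = k => hk h, fun h : k = k' => hk h.symm]

lemma toList_split {k : Fin n} {v : V n} (hv : v ∈ B k) :
    ∃ l1 l2, (B k).toList = l1 ++ v :: l2 ∧ v ∉ l1 ∧ v ∉ l2 := by
  obtain ⟨l1, l2, h⟩ := List.append_of_mem (Finset.mem_toList.2 hv)
  refine ⟨l1, l2, h, ?_, ?_⟩
  · have hnd := Finset.nodup_toList (B k)
    rw [h, List.nodup_append] at hnd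
    intro hm
    exact hnd.2.2 v hm v List.mem_cons_self rfl
  · have hnd := Finset.nodup_toList (B k)
    rw [h, List.nodup_append] at hnd
    exact (List.nodup_cons.1 hnd.2.1).1

lemma aL_not_mem_flat {k : Fin n} {v : V n} {l : List (V n)} (hvl : v ∉ l) :
    aL k v ∉ l.flatMap (gad k) := by
  intro h
  obtain ⟨w, hw, hmem⟩ := List.mem_flatMap.1 h
  rcases (mem_gad).1 hmem with he | ⟨_, he⟩ | ⟨i, _, _, he⟩
  · obtain ⟨-, rfl⟩ := aL_eq_aL.1 he; exact hvl hw
  · exact aL_ne_dL he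
  · exact aL_ne_cL he

lemma dL_not_mem_flat {k : Fin n} {v : V n} {l : List (V n)} (hvl : v ∉ l) :
    dL k v ∉ l.flatMap (gad k) := by
  intro h
  obtain ⟨w, hw, hmem⟩ := List.mem_flatMap.1 h
  rcases (mem_gad).1 hmem with he | ⟨_, he⟩ | ⟨i, _, _, he⟩
  · exact dL_ne_aL he
  · obtain ⟨-, rfl⟩ := dL_eq_dL.1 he; exact hvl hw
  · exact dL_ne_cL he

lemma aL_not_mem_cs {k k' : Fin n} {v v' : V n} : aL k v ∉ cs k' v' := by
  intro h
  rcases mem_cs.1 h with ⟨i, _, _, he⟩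
  exact aL_ne_cL he

lemma dL_not_mem_cs {k k' : Fin n} {v v' : V n} : dL k v ∉ cs k' v' := by
  intro h
  rcases mem_cs.1 h with ⟨i, _, _, he⟩
  exact dL_ne_cL he

lemma aL_not_mem_tl {k k' : Fin n} {v : V n} : aL k v ∉ tl B k' :=
  List.count_eq_zero.1 (count_tl_aL B)

lemma betweenWord_aL {k : Fin n} {v : V n} (hv : v ∈ B k) :
    betweenWord (comp B k) (aL k v) = cs k v ++ (if v k = 1 then [dL k v] else []) := by
  obtain ⟨l1, l2, hsplit, hv1, hv2⟩ := toList_split B hv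
  have hx : aL k v ∉ l1.flatMap (gad k) := aL_not_mem_flat hv1
  by_cases h : v k = 1
  · have hcomp : comp B k = (l1.flatMap (gad k)) ++ aL k v ::
        ((cs k v ++ [dL k v]) ++ aL k v :: (dL k v :: (l2.flatMap (gad k) ++ tl B k))) := by
      rw [comp, hsplit]
      simp [gad, h, List.append_assoc]
    rw [hcomp, betweenWord_spec hx ?_, if_pos h]
    intro hm
    rcases List.mem_append.1 hm with hm | hm
    · exact aL_not_mem_cs hm
    · rw [List.mem_singleton] at hm; exact aL_ne_dL hm
  · have hcomp : comp B k = (l1.flatMap (gad k)) ++ aL k v ::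
        (cs k v ++ aL k v :: (l2.flatMap (gad k) ++ tl B k)) := by
      rw [comp, hsplit]
      simp [gad, h, List.append_assoc]
    rw [hcomp, betweenWord_spec hx aL_not_mem_cs, if_neg h]
    simp

lemma betweenWord_dL {k : Fin n} {v : V n} (hv : v ∈ B k) (h : v k = 1) :
    betweenWord (comp B k) (dL k v) = [aL k v] := by
  obtain ⟨l1, l2, hsplit, hv1, hv2⟩ := toList_split B hv
  have hcomp : comp B k = ((l1.flatMap (gad k)) ++ aL k v :: cs k v) ++ dL k v ::
      ([aL k v] ++ dL k v :: (l2.flatMap (gad k) ++ tl B k)) := by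
    rw [comp, hsplit]
    simp [gad, h, List.append_assoc]
  rw [hcomp, betweenWord_spec ?_ ?_]
  · intro hm
    rcases List.mem_append.1 hm with hm | hm
    · exact dL_not_mem_flat hv1 hm
    · rcases List.mem_cons.1 hm with he | hm
      · exact dL_ne_aL he
      · exact dL_not_mem_cs hm
  · intro hm
    rw [List.mem_singleton] at hm
    exact dL_ne_aL hm

def ek (k : Fin n) : V n := fun i => if i = k then 1 else 0

lemma ek_ne_zero {k : Fin n} : ek k ≠ 0 := by
  intro h
  have := congrFun h k
  simp [ek] at this

lemma aL_not_mem_comp {k i : Fin n} {v : V n} (hik : i ≠ k) : aL k v ∉ comp B i := by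
  intro hm
  rcases (mem_comp B).1 hm with ⟨w, _, hg⟩ | ht
  · rcases mem_gad.1 hg with he | ⟨_, he⟩ | ⟨i', _, _, he⟩
    · exact hik (aL_eq_aL.1 he).1.symm
    · exact aL_ne_dL he
    · exact aL_ne_cL he
  · exact aL_not_mem_tl B ht

lemma dL_not_mem_comp {k i : Fin n} {v : V n} (hik : i ≠ k) : dL k v ∉ comp B i := by
  intro hm
  rcases (mem_comp B).1 hm with ⟨w, _, hg⟩ | ht
  · rcases mem_gad.1 hg with he | ⟨_, he⟩ | ⟨i', _, _, he⟩
    · exact dL_ne_aL he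
    · exact hik (dL_eq_dL.1 he).1.symm
    · exact dL_ne_cL he
  · rcases (mem_tl B).1 ht with ⟨k'', w, _, _, _, he⟩
    exact dL_ne_cL he

lemma cL_mem_comp_iff {k i j : Fin n} {v : V n} (hik : i ≠ k) (hjk : j ≠ k)
    (hv : v ∈ B k) (hvj : v j = 1) : cL k v j ∈ comp B i ↔ j = i := by
  rw [mem_comp]
  constructor
  · rintro (⟨w, _, hg⟩ | ht)
    · rcases mem_gad.1 hg with he | ⟨_, he⟩ | ⟨i', _, _, he⟩
      · exact absurd he cL_ne_aL
      · exact absurd he cL_ne_dL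
      · exact absurd (cL_eq_cL.1 he).1.symm hik
    · rcases (mem_tl B).1 ht with ⟨k'', w, h1, h2, h3, he⟩
      exact (cL_eq_cL.1 he).2.2
  · rintro rfl
    exact Or.inr ((mem_tl B).2 ⟨k, v, Ne.symm hik, hv, hvj, rfl⟩)

lemma zmod2_cases (x : ZMod 2) : x = 0 ∨ x = 1 := by
  fin_cases x
  · exact Or.inl rfl
  · exact Or.inr rfl

lemma linkVec_cs {k : Fin n} {v : V n} (hv : v ∈ B k) :
    linkVec (comp B) k (cs k v ++ if v k = 1 then [dL k v] else []) = v := by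
  set y : Word := cs k v ++ (if v k = 1 then [dL k v] else []) with hy
  have hynd : y.Nodup := by
    rw [hy, List.nodup_append]
    refine ⟨cs_nodup, ?_, ?_⟩
    · split <;> simp
    · intro a ha b hb
      split at hb
      · rw [List.mem_singleton] at hb; subst hb; rintro rfl; exact dL_not_mem_cs ha
      · exact absurd hb List.not_mem_nil
  have hmy : ∀ a, a ∈ y ↔ ((∃ i, i ≠ k ∧ v i = 1 ∧ a = cL k v i) ∨ (v k = 1 ∧ a = dL k v)) := by
    intro a
    rw [hy, List.mem_append, mem_cs]
    constructor
    · rintro (h | h)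
      · exact Or.inl h
      · split at h
        · rw [List.mem_singleton] at h; exact Or.inr ⟨‹_›, h⟩
        · exact absurd h List.not_mem_nil
    · rintro (h | ⟨h1, rfl⟩)
      · exact Or.inl h
      · right; rw [if_pos h1]; simp
  funext i
  simp only [linkVec]
  by_cases hik : i = k
  · subst hik
    have hfe : (y.toFinset.filter fun a => y.count a = 1 ∧
        (if i = i then (comp B i).count a = 2 else a ∈ comp B i)) =
        (if v i = 1 then {dL i v} else ∅) := by
      ext a
      simp only [Finset.mem_filter, List.mem_toFinset, if_pos rfl]
      constructor
      · rintro ⟨hay, -, hc2⟩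
        rcases (hmy a).1 hay with ⟨j, hjk, hvj, rfl⟩ | ⟨h1, rfl⟩
        · rw [count_comp_cL] at hc2
          simp [hjk, hvj, hv] at hc2
        · rw [if_pos h1]; exact Finset.mem_singleton_self _
      · intro ha
        by_cases h1 : v i = 1
        · rw [if_pos h1, Finset.mem_singleton] at ha
          subst ha
          have hmem : dL i v ∈ y := (hmy _).2 (Or.inr ⟨h1, rfl⟩)
          refine ⟨hmem, List.count_eq_one_of_mem hynd hmem, ?_⟩
          rw [count_comp_dL]
          simp [hv, h1]
        · rw [if_neg h1] at ha
          exact absurd ha (Finset.notMem_empty a)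
    rw [hfe]
    rcases zmod2_cases (v i) with h | h <;> simp [h]
  · have hfe : (y.toFinset.filter fun a => y.count a = 1 ∧
        (if i = k then (comp B k).count a = 2 else a ∈ comp B i)) =
        (if v i = 1 then {cL k v i} else ∅) := by
      ext a
      simp only [Finset.mem_filter, List.mem_toFinset, if_neg hik]
      constructor
      · rintro ⟨hay, -, hc⟩
        rcases (hmy a).1 hay with ⟨j, hjk, hvj, rfl⟩ | ⟨h1, rfl⟩
        · have := (cL_mem_comp_iff B hik hjk hv hvj).1 hc
          subst this
          rw [if_pos hvj]; simp
        · exact absurd hc (dL_not_mem_comp B hik)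
      · intro ha
        split at ha
        · rw [Finset.mem_singleton] at ha
          subst ha
          have hmem : cL k v i ∈ y := (hmy _).2 (Or.inl ⟨i, hik, ‹_›, rfl⟩)
          exact ⟨hmem, List.count_eq_one_of_mem hynd hmem,
            (cL_mem_comp_iff B hik hik hv ‹_›).2 rfl⟩
        · exact absurd ha (Finset.notMem_empty a)
    rw [hfe]
    rcases zmod2_cases (v i) with h | h <;> simp [h]

lemma linkVec_aL_single {k : Fin n} {v : V n} (hv : v ∈ B k) :
    linkVec (comp B) k [aL k v] = ek k := by
  funext i
  simp only [linkVec]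
  by_cases hik : i = k
  · subst hik
    have hfe : (([aL i v] : Word).toFinset.filter fun a => ([aL i v] : Word).count a = 1 ∧
        (if i = i then (comp B i).count a = 2 else a ∈ comp B i)) = {aL i v} := by
      ext a
      simp only [Finset.mem_filter, List.mem_toFinset, List.mem_singleton,
        Finset.mem_singleton, if_pos rfl]
      constructor
      · rintro ⟨rfl, -, -⟩; rfl
      · rintro rfl
        refine ⟨rfl, by simp, ?_⟩
        rw [count_comp_aL]
        simp [hv]
    rw [hfe]
    simp [ek]
  · have hfe : (([aL k v] : Word).toFinset.filter fun a => ([aL k v] : Word).count a = 1 ∧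
        (if i = k then (comp B k).count a = 2 else a ∈ comp B i)) = ∅ := by
      refine Finset.eq_empty_iff_forall_notMem.2 ?_
      intro a ha
      simp only [Finset.mem_filter, List.mem_toFinset, List.mem_singleton] at ha
      obtain ⟨rfl, -, hc⟩ := ha
      rw [if_neg hik] at hc
      exact aL_not_mem_comp B hik hc
    rw [hfe]
    simp [ek, hik]

lemma letterVec_aL {k : Fin n} {v : V n} (hv : v ∈ B k) :
    letterVec (comp B) k (aL k v) = v := by
  rw [letterVec, betweenWord_aL B hv, linkVec_cs B hv]

lemma letterVec_dL {k : Fin n} {v : V n} (hv : v ∈ B k) (h : v k = 1) :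
    letterVec (comp B) k (dL k v) = ek k := by
  rw [letterVec, betweenWord_dL B hv h, linkVec_aL_single B hv]

lemma count_total (a : ℕ) : (totalWord (comp B)).count a = ∑ k, (comp B k).count a := by
  rw [totalWord, List.count_flatten, List.map_ofFn, List.sum_ofFn]
  rfl

lemma gauss : IsGaussPhrase (comp B) := by
  intro a ha
  have hmem : ∃ k, a ∈ comp B k := by
    rw [totalWord, List.mem_flatten] at ha
    obtain ⟨l, hl, hal⟩ := ha
    rw [List.mem_ofFn] at hl
    obtain ⟨k, rfl⟩ := hl
    exact ⟨k, hal⟩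
  rw [count_total]
  obtain ⟨k, hk⟩ := hmem
  rcases (mem_comp B).1 hk with ⟨v, hv, hg⟩ | ht
  · rcases mem_gad.1 hg with rfl | ⟨h1, rfl⟩ | ⟨i, hik, hvi, rfl⟩
    · have hc : ∀ k' : Fin n, (comp B k').count (aL k v) = if k' = k then 2 else 0 := by
        intro k'
        rw [count_comp_aL]
        by_cases h : k' = k
        · subst h; simp [hv]
        · simp [h]
      simp only [hc]
      simp
    · have hc : ∀ k' : Fin n, (comp B k').count (dL k v) = if k' = k then 2 else 0 := by
        intro k'
        rw [count_comp_dL]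
        by_cases h : k' = k
        · subst h; simp [hv, h1]
        · simp [h]
      simp only [hc]
      simp
    · have hc : ∀ k' : Fin n, (comp B k').count (cL k v i) =
          (if k' = k then 1 else 0) + (if k' = i then 1 else 0) := by
        intro k'
        rw [count_comp_cL]
        by_cases h : k' = k
        · subst h
          have hh1 : ¬ k' = i := fun hh => hik hh.symm
          simp [hv, hik, hvi, hh1]
        · by_cases h2 : k' = i
          · subst h2
            have hh1 : ¬ k = k' := fun hh => h hh.symm
            simp [h, hv, hvi, hh1]
          · have hh1 : ¬ i = k' := fun hh => h2 hh.symm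
            simp [h, h2, hh1]
      simp only [hc]
      rw [Finset.sum_add_distrib]
      simp [Finset.sum_ite_eq', hik]
  · obtain ⟨k'', w, hkk, hw, hwk, rfl⟩ := (mem_tl B).1 ht
    have hc : ∀ k' : Fin n, (comp B k').count (cL k'' w k) =
        (if k' = k'' then 1 else 0) + (if k' = k then 1 else 0) := by
      intro k'
      rw [count_comp_cL]
      by_cases h : k' = k''
      · subst h
        have hh1 : ¬ k = k' := fun hh => hkk hh.symm
        simp [hw, hwk, hkk, hh1]
      · by_cases h2 : k' = k
        · subst h2
          have hh1 : ¬ k'' = k' := fun hh => h hh.symm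
          simp [h, hh1, hw, hwk, hkk]
        · have hh1 : ¬ k = k' := fun hh => h2 hh.symm
          simp [h, h2, hh1]
    simp only [hc]
    rw [Finset.sum_add_distrib]
    simp [Finset.sum_ite_eq', fun hh : k'' = k => hkk hh]

lemma filter_comp_eq {k : Fin n} (u : V n) :
    ((comp B k).toFinset.filter fun a =>
        (comp B k).count a = 2 ∧ letterVec (comp B) k a = u) =
      ((B k).filter fun v => v = u).image (aL k) ∪
      (if ek k = u then ((B k).filter fun v => v k = 1).image (dL k) else ∅) := by
  ext a
  simp only [Finset.mem_filter, List.mem_toFinset, Finset.mem_union, Finset.mem_image]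
  constructor
  · rintro ⟨hmem, hc2, hlv⟩
    rcases (mem_comp B).1 hmem with ⟨v, hv, hg⟩ | ht
    · rcases mem_gad.1 hg with rfl | ⟨h1, rfl⟩ | ⟨i, hik, hvi, rfl⟩
      · left
        refine ⟨v, ⟨hv, ?_⟩, rfl⟩
        rw [← hlv, letterVec_aL B hv]
      · right
        rw [letterVec_dL B hv h1] at hlv
        rw [if_pos hlv]
        exact Finset.mem_image.2 ⟨v, Finset.mem_filter.2 ⟨hv, h1⟩, rfl⟩
      · rw [count_comp_cL] at hc2
        simp [hik, hvi, hv, fun hh : i = k => hik hh] at hc2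
    · obtain ⟨k'', w, hkk, hw, hwk, rfl⟩ := (mem_tl B).1 ht
      rw [count_comp_cL] at hc2
      simp [hkk, hw, hwk, fun hh : k = k'' => hkk hh.symm] at hc2
  · rintro (⟨v, hvf, rfl⟩ | hin)
    · obtain ⟨hv, rfl⟩ := hvf
      refine ⟨(mem_comp B).2 (Or.inl ⟨v, hv, mem_gad.2 (Or.inl rfl)⟩), ?_, letterVec_aL B hv⟩
      rw [count_comp_aL]
      simp [hv]
    · by_cases he : ek k = u
      · rw [if_pos he] at hin
        obtain ⟨v, hvf, rfl⟩ := Finset.mem_image.1 hin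
        obtain ⟨hv, h1⟩ := Finset.mem_filter.1 hvf
        refine ⟨(mem_comp B).2 (Or.inl ⟨v, hv, mem_gad.2 (Or.inr (Or.inl ⟨h1, rfl⟩))⟩), ?_, ?_⟩
        · rw [count_comp_dL]
          simp [hv, h1]
        · rw [letterVec_dL B hv h1, he]
      · rw [if_neg he] at hin
        exact absurd hin (Finset.notMem_empty a)

lemma card_filter_comp {k : Fin n} (u : V n) :
    ((comp B k).toFinset.filter fun a =>
        (comp B k).count a = 2 ∧ letterVec (comp B) k a = u).card =
      (if u ∈ B k then 1 else 0) +
      (if ek k = u then ((B k).filter fun v => v k = 1).card else 0) := by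
  rw [filter_comp_eq]
  rw [Finset.card_union_of_disjoint]
  · congr 1
    · rw [Finset.card_image_of_injective _ (fun a b h => (aL_eq_aL.1 h).2)]
      rw [Finset.filter_eq']
      split <;> simp
    · split
      · rw [Finset.card_image_of_injective _ (fun a b h => (dL_eq_dL.1 h).2)]
      · simp
  · intro t h1 h2
    simp only [Finset.le_eq_subset, Finset.bot_eq_empty, Finset.subset_empty] at *
    rw [Finset.eq_empty_iff_forall_notMem]
    intro x hx
    have hx1 := h1 hx
    have hx2 := h2 hx
    obtain ⟨v, -, rfl⟩ := Finset.mem_image.1 hx1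
    split at hx2
    · obtain ⟨w, -, he⟩ := Finset.mem_image.1 hx2
      exact aL_ne_dL he.symm
    · exact absurd hx2 (Finset.notMem_empty _)

lemma Bk_comp_eq {k : Fin n} (h0k : (0 : V n) ∉ B k)
    (hevk : Even (((B k).filter fun v => v k = 1).card)) :
    Bk (comp B) k = B k := by
  ext u
  simp only [Bk, Finset.mem_filter, Finset.mem_univ, true_and]
  rw [card_filter_comp]
  constructor
  · rintro ⟨-, hodd⟩
    by_cases he : ek k = u
    · rw [if_pos he, Nat.odd_add] at hodd
      have h1 : Odd (if u ∈ B k then 1 else 0) := hodd.2 hevk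
      by_contra hu
      simp [hu] at h1
    · rw [if_neg he, Nat.add_zero] at hodd
      by_contra hu
      simp [hu] at hodd
  · intro hu
    refine ⟨?_, ?_⟩
    · rintro rfl
      exact h0k hu
    · rw [if_pos hu]
      by_cases he : ek k = u
      · rw [if_pos he, Nat.odd_add]
        exact iff_of_true odd_one hevk
      · rw [if_neg he]
        simp

end SoAux

/-- given, for each `k`, a subset `B_k` of `(ℤ/2)ⁿ \ {0}` with an even
number of `k`-odd vectors, there is a single Gauss phrase realizing all of them. -/
theorem So_realizable {n : ℕ} (B : Fin n → Finset (Fin n → ZMod 2))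
    (h0 : ∀ k, (0 : Fin n → ZMod 2) ∉ B k)
    (hev : ∀ k, Even (((B k).filter fun v => v k = 1).card)) :
    ∃ p : Phrase n, IsGaussPhrase p ∧ ∀ k : Fin n, Bk p k = B k := by
  exact ⟨SoAux.comp B, SoAux.gauss B, fun k => SoAux.Bk_comp_eq B (h0 k) (hev k)⟩
end

section
/- For every n-component Gauss phrase p and every k, the set O_k(p) contains an even number of k-odd orbits. Here the k-th entry of the linking vector l_k of the k-th component is 0, so all vectors in a given orbit of K(l_k) have the same k-th entry, and an orbit is called k-odd if its vectors have k-th entry 1. -/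
def cross (a b : ℕ) : Word → ℕ
  | [] => 0
  | c :: t => cross a b t + (if c = b then t.count a else 0)

lemma cross_append (a b : ℕ) (u v : Word) :
    cross a b (u ++ v) = cross a b u + cross a b v + u.count b * v.count a := by
  induction u with
  | nil => simp [cross]
  | cons c t ih =>
    by_cases hc : c = b <;>
      simp [cross, ih, hc, List.count_append, List.count_cons] <;> ring

lemma cross_eq_zero {a : ℕ} (b : ℕ) {w : Word} (h : a ∉ w) : cross a b w = 0 := by
  induction w with
  | nil => rfl
  | cons c t ih =>
    simp only [List.mem_cons, not_or] at h
    simp [cross, ih h.2, List.count_eq_zero_of_not_mem h.2]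

lemma cross_add_cross {a b : ℕ} (hab : a ≠ b) (w : Word) :
    cross a b w + cross b a w = w.count a * w.count b := by
  induction w with
  | nil => simp [cross]
  | cons c t ih =>
    rcases eq_or_ne c a with rfl | hca
    · simp only [cross, if_neg hab, if_pos rfl, List.count_cons_self,
        List.count_cons_of_ne hab, add_zero, add_one_mul, if_true]
      rw [← ih]; ring
    · rcases eq_or_ne c b with rfl | hcb
      · simp only [cross, if_pos rfl, if_neg (Ne.symm hab), List.count_cons_self,
          List.count_cons_of_ne (Ne.symm hab), add_zero, mul_add_one, if_true]
        rw [← ih]; ring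
      · simp [cross, hca, hcb, List.count_cons_of_ne (Ne.symm hca),
          List.count_cons_of_ne (Ne.symm hcb), ih]

lemma exists_split {a : ℕ} {w : Word} (h : a ∈ w) :
    ∃ x t, w = x ++ a :: t ∧ a ∉ x := by
  induction w with
  | nil => simp at h
  | cons c t ih =>
    rcases eq_or_ne c a with rfl | hca
    · exact ⟨[], t, rfl, by simp⟩
    · rcases ih (by simpa [Ne.symm hca] using h) with ⟨x, u, rfl, hx⟩
      exact ⟨c :: x, u, rfl, by simp [hx, Ne.symm hca]⟩

lemma between_spec {w : Word} {a : ℕ} (h : w.count a = 2) :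
    ∃ x y z, w = x ++ a :: (y ++ a :: z) ∧ a ∉ x ∧ a ∉ y ∧ a ∉ z ∧
      betweenWord w a = y := by
  have h1 : a ∈ w := by
    have := List.count_pos_iff.mp (by omega : 0 < w.count a); exact this
  obtain ⟨x, t, rfl, hx⟩ := exists_split h1
  have ht : t.count a = 1 := by
    simp [List.count_append, List.count_eq_zero_of_not_mem hx] at h; omega
  have h2 : a ∈ t := List.count_pos_iff.mp (by omega)
  obtain ⟨y, z, rfl, hy⟩ := exists_split h2
  have hz : a ∉ z := by
    intro hz
    have := List.count_pos_iff.mpr hz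
    simp [List.count_append, List.count_eq_zero_of_not_mem hy] at ht
    omega
  refine ⟨x, y, z, rfl, hx, hy, hz, ?_⟩
  have hidx : (x ++ a :: (y ++ a :: z)).idxOf a = x.length := by
    rw [List.idxOf_append_of_notMem hx]; simp
  rw [betweenWord, hidx]
  have : (x ++ a :: (y ++ a :: z)).drop (x.length + 1) = y ++ a :: z := by
    have : x ++ a :: (y ++ a :: z) = (x ++ [a]) ++ (y ++ a :: z) := by simp
    rw [this]
    have := List.drop_left (l₁ := x ++ [a]) (l₂ := y ++ a :: z)
    simpa using this
  rw [this]
  clear hidx this h ht h1 h2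
  induction y with
  | nil => simp
  | cons c u ihy =>
    simp only [List.mem_cons, not_or] at hy
    simp only [List.takeWhile_cons, decide_not, ne_eq] at ihy ⊢
    simp [Ne.symm hy.1, ihy hy.2]

lemma not_mem_between (w : Word) (a : ℕ) : a ∉ betweenWord w a := by
  intro h
  have := List.mem_takeWhile_imp h
  simp at this

lemma between_count_le (w : Word) (a b : ℕ) :
    (betweenWord w a).count b ≤ w.count b := by
  have h1 : (betweenWord w a).Sublist (w.drop (w.idxOf a + 1)) :=
    List.takeWhile_sublist _
  have h2 : (w.drop (w.idxOf a + 1)).Sublist w := List.drop_sublist _ _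
  exact le_trans (h1.count_le b) (h2.count_le b)

lemma mem_of_mem_between {w : Word} {a b : ℕ} (h : b ∈ betweenWord w a) : b ∈ w := by
  have h1 : (betweenWord w a).Sublist (w.drop (w.idxOf a + 1)) :=
    List.takeWhile_sublist _
  have h2 : (w.drop (w.idxOf a + 1)).Sublist w := List.drop_sublist _ _
  exact (h1.trans h2).mem h

lemma cross_between {w : Word} {a b : ℕ} (hab : a ≠ b) (ha : w.count a = 2) :
    (cross a b w : ZMod 2) = ((betweenWord w a).count b : ZMod 2) := by
  obtain ⟨x, y, z, rfl, hx, hy, hz, hbw⟩ := between_spec ha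
  rw [hbw]
  have e0 : cross a b (a :: (y ++ a :: z)) = y.count b := by
    show cross a b (y ++ a :: z) + _ = _
    rw [if_neg hab, cross_append, cross_eq_zero b hy]
    show 0 + (cross a b z + if a = b then z.count a else 0) + _ = _
    rw [if_neg hab, cross_eq_zero b hz,
      List.count_cons_self, List.count_eq_zero_of_not_mem hz]
    ring
  have e1 : cross a b (x ++ a :: (y ++ a :: z)) = x.count b * 2 + y.count b := by
    rw [cross_append, cross_eq_zero b hx, e0, List.count_cons_self,
      List.count_append, List.count_cons_self,
      List.count_eq_zero_of_not_mem hy, List.count_eq_zero_of_not_mem hz]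
    ring
  rw [e1]
  push_cast
  ring_nf
  rw [show (2 : ZMod 2) = 0 by decide]
  ring

lemma between_symm {w : Word} {a b : ℕ} (hab : a ≠ b)
    (ha : w.count a = 2) (hb : w.count b = 2) :
    ((betweenWord w a).count b : ZMod 2) = ((betweenWord w b).count a : ZMod 2) := by
  rw [← cross_between hab ha, ← cross_between (Ne.symm hab) hb]
  have h0 : (cross a b w : ZMod 2) + (cross b a w : ZMod 2) = 0 := by
    rw [← Nat.cast_add, cross_add_cross hab, ha, hb]
    decide
  have key : ∀ x y : ZMod 2, x + y = 0 → x = y := by decide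
  exact key _ _ h0

lemma even_of_cast_zero {m : ℕ} (h : (m : ZMod 2) = 0) : Even m := by
  rw [ZMod.natCast_eq_zero_iff] at h
  obtain ⟨c, rfl⟩ := h
  exact ⟨c, by omega⟩

lemma cast_eq_ite_odd (m : ℕ) : (m : ZMod 2) = if Odd m then 1 else 0 := by
  rcases Nat.even_or_odd m with he | ho
  · rw [if_neg (Nat.not_odd_iff_even.mpr he), ZMod.natCast_eq_zero_iff]
    obtain ⟨c, rfl⟩ := he
    exact ⟨c, by omega⟩
  · rw [if_pos ho]
    obtain ⟨t, rfl⟩ := ho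
    push_cast
    rw [show (2 : ZMod 2) = 0 by decide]
    ring

lemma even_card_filter_odd {α : Type*} [DecidableEq α] (s : Finset α) (g : α → ℕ)
    (h : Even (∑ x ∈ s, g x)) : Even ((s.filter fun x => Odd (g x)).card) := by
  apply even_of_cast_zero
  have h0 : ((∑ x ∈ s, g x : ℕ) : ZMod 2) = 0 := by
    rw [ZMod.natCast_eq_zero_iff]
    obtain ⟨c, hc⟩ := h
    exact ⟨c, by omega⟩
  rw [Finset.card_filter]
  push_cast
  calc (∑ x ∈ s, if Odd (g x) then (1 : ZMod 2) else 0)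
      = ∑ x ∈ s, ((g x : ZMod 2)) := by
        refine Finset.sum_congr rfl fun x _ => ?_
        rw [cast_eq_ite_odd]
    _ = ((∑ x ∈ s, g x : ℕ) : ZMod 2) := by push_cast; rfl
    _ = 0 := h0

/-- `O_k(p)` contains an even number of `k`-odd orbits (orbits all of
whose vectors have `k`-th entry `1`). -/
theorem Ok_even_number_of_k_odd_orbits {n : ℕ} (p : Phrase n)
    (hp : IsGaussPhrase p) (k : Fin n) :
    Even (((Ok p k).filter fun O => ∀ v ∈ O, v k = 1).card) := by
  classical
  set w : Word := p k with hw
  set l : Fin n → ZMod 2 := linkVec p k (p k) with hl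
  set f : ℕ → Fin n → ZMod 2 := letterVec p k with hf
  set S : Finset ℕ := w.toFinset.filter (fun a => w.count a = 2) with hS
  have hmemS : ∀ a ∈ S, w.count a = 2 := fun a ha => (Finset.mem_filter.mp ha).2
  -- the k-th entry of the linking vector of the component is 0
  have hlk : l k = 0 := by
    have he : ∀ a ∈ (p k).toFinset,
        ¬((p k).count a = 1 ∧ (p k).count a = 2) := by
      rintro a _ ⟨h1, h2⟩; omega
    simp only [hl, linkVec, eq_self_iff_true, if_true,
      Finset.filter_false_of_mem he, Finset.card_empty, Nat.cast_zero]
  -- the k-th entry of the letter vector, as a sum over S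
  have hfk : ∀ a, f a k = ∑ b ∈ S, ((betweenWord w a).count b : ZMod 2) := by
    intro a
    have hset : ((betweenWord w a).toFinset.filter fun b => (betweenWord w a).count b = 1 ∧
        (if k = k then (p k).count b = 2 else b ∈ p k))
        = S.filter fun b => (betweenWord w a).count b = 1 := by
      ext b
      simp only [Finset.mem_filter, List.mem_toFinset, if_pos rfl, hS]
      constructor
      · rintro ⟨hb, h1, h2⟩
        exact ⟨⟨mem_of_mem_between hb, h2⟩, h1⟩
      · rintro ⟨⟨_, h2⟩, h1⟩
        exact ⟨List.count_pos_iff.mp (by omega), h1, h2⟩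
    show (letterVec p k a) k = _
    rw [letterVec, linkVec, hset, Finset.card_filter]
    push_cast
    refine Finset.sum_congr rfl fun b hb => ?_
    have hble : (betweenWord w a).count b ≤ 2 := by
      have := between_count_le w a b
      rw [hmemS b hb] at this
      exact this
    set m : ℕ := (betweenWord w a).count b with hm
    interval_cases m <;> simp <;> decide
  -- the number of single-component letters with k-th entry 1 is even
  have hS1 : Even ((S.filter fun a => f a k = 1).card) := by
    apply even_of_cast_zero
    rw [Finset.card_filter]
    push_cast
    have hstep : ∀ a ∈ S, (if f a k = 1 then (1 : ZMod 2) else 0) = f a k := by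
      intro a _
      have : ∀ x : ZMod 2, (if x = 1 then (1 : ZMod 2) else 0) = x := by decide
      exact this _
    rw [Finset.sum_congr rfl hstep]
    have : ∑ a ∈ S, f a k
        = ∑ q ∈ S ×ˢ S, ((betweenWord w q.1).count q.2 : ZMod 2) := by
      rw [Finset.sum_product]
      exact Finset.sum_congr rfl fun a _ => hfk a
    rw [this]
    refine Finset.sum_involution (fun q _ => q.swap) ?_ ?_ ?_ ?_
    · rintro ⟨a, b⟩ hq
      simp only [Finset.mem_product] at hq
      rcases eq_or_ne a b with rfl | hab
      · simp [List.count_eq_zero_of_not_mem (not_mem_between w a)]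
      · show ((betweenWord w a).count b : ZMod 2) + ((betweenWord w b).count a : ZMod 2) = 0
        rw [← between_symm hab (hmemS a hq.1) (hmemS b hq.2)]
        have : ∀ x : ZMod 2, x + x = 0 := by decide
        exact this _
    · rintro ⟨a, b⟩ hq hne h
      apply hne
      have hab : a = b := congrArg Prod.snd h
      subst hab
      simp [List.count_eq_zero_of_not_mem (not_mem_between w a)]
    · rintro ⟨a, b⟩ hq
      simpa [Finset.mem_product, and_comm] using hq
    · rintro ⟨a, b⟩ _; rfl
  -- orbit machinery
  set orb : (Fin n → ZMod 2) → Finset (Fin n → ZMod 2) := fun v => {v, v + l} with horb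
  have hll : ∀ v : Fin n → ZMod 2, v + l + l = v := by
    intro v; funext i
    have : ∀ x y : ZMod 2, x + y + y = x := by decide
    exact this _ _
  have horb_eq : ∀ u v, u ∈ orb v → orb u = orb v := by
    intro u v hu
    rcases Finset.mem_insert.mp hu with rfl | hu'
    · rfl
    · rw [Finset.mem_singleton] at hu'
      subst hu'
      show ({v + l, v + l + l} : Finset _) = {v, v + l}
      rw [hll]
      exact Finset.pair_comm _ _
  have hOk1 : ∀ v : Fin n → ZMod 2, v k = 1 → ∀ u ∈ orb v, u k = 1 := by
    intro v hv u hu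
    rcases Finset.mem_insert.mp hu with rfl | hu'
    · exact hv
    · rw [Finset.mem_singleton] at hu'
      subst hu'
      show v k + l k = 1
      rw [hlk, hv, add_zero]
  set V1 : Finset (Fin n → ZMod 2) := Finset.univ.filter (fun v => v k = 1) with hV1
  set orbSet : Finset (Finset (Fin n → ZMod 2)) := V1.image orb with horbSet
  set cnt : Finset (Fin n → ZMod 2) → ℕ := fun O =>
    ((p k).toFinset.filter fun a => (p k).count a = 2 ∧ letterVec p k a ∈ O).card with hcnt
  have hcnt' : ∀ O, cnt O = (S.filter fun a => f a ∈ O).card := by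
    intro O
    rw [hcnt, hS, Finset.filter_filter]
  -- identification of the filtered sets
  have hkey : ((Ok p k).filter fun O => ∀ v ∈ O, v k = 1)
      = orbSet.filter fun O => Odd (cnt O) := by
    ext O
    simp only [Ok, Finset.filter_filter, Finset.mem_filter, Finset.mem_univ, true_and,
      horbSet, Finset.mem_image, hV1]
    constructor
    · rintro ⟨⟨⟨v, rfl⟩, h0, hodd⟩, hall⟩
      exact ⟨⟨v, hall v (Finset.mem_insert_self _ _), rfl⟩, hodd⟩
    · rintro ⟨⟨v, hv, rfl⟩, hodd⟩
      have hall : ∀ u ∈ orb v, u k = 1 := hOk1 v hv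
      refine ⟨⟨⟨v, rfl⟩, ?_, hodd⟩, hall⟩
      intro h0
      have := hall 0 h0
      simp at this
  rw [hkey]
  apply even_card_filter_odd
  -- the sum of the counts over all orbits equals |S1|
  have hdisj : ∀ O1 ∈ orbSet, ∀ O2 ∈ orbSet, O1 ≠ O2 →
      Disjoint (S.filter fun a => f a ∈ O1) (S.filter fun a => f a ∈ O2) := by
    intro O1 h1 O2 h2 hne
    rw [Finset.disjoint_left]
    intro a ha1 ha2
    apply hne
    have hm1 := (Finset.mem_filter.mp ha1).2
    have hm2 := (Finset.mem_filter.mp ha2).2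
    simp only [horbSet, Finset.mem_image] at h1 h2
    obtain ⟨v1, _, rfl⟩ := h1
    obtain ⟨v2, _, rfl⟩ := h2
    rw [← horb_eq _ _ hm1, ← horb_eq _ _ hm2]
  have hcover : orbSet.biUnion (fun O => S.filter fun a => f a ∈ O)
      = S.filter fun a => f a k = 1 := by
    ext a
    simp only [Finset.mem_biUnion, Finset.mem_filter]
    constructor
    · rintro ⟨O, hO, haS, haO⟩
      refine ⟨haS, ?_⟩
      simp only [horbSet, Finset.mem_image, hV1, Finset.mem_filter, Finset.mem_univ,
        true_and] at hO
      obtain ⟨v, hv, rfl⟩ := hO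
      exact hOk1 v hv _ haO
    · rintro ⟨haS, hak⟩
      refine ⟨orb (f a), ?_, ⟨haS, ?_⟩⟩
      · simp only [horbSet, Finset.mem_image, hV1, Finset.mem_filter, Finset.mem_univ,
          true_and]
        exact ⟨f a, hak, rfl⟩
      · exact Finset.mem_insert_self _ _
  have h1 : ∑ O ∈ orbSet, cnt O = ∑ O ∈ orbSet, (S.filter fun a => f a ∈ O).card :=
    Finset.sum_congr rfl fun O _ => hcnt' O
  rw [h1, ← Finset.card_biUnion hdisj, hcover]
  exact hS1
end

section
/- The 3-component Gauss phrases ∅|∅|∅ (all three components empty) and AB|AC|BC are not homotopic. -/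
/- Auxiliary machinery for the proof. -/
def tagAux (c : ℕ) : List (Option ℕ) → List (ℕ × ℕ)
  | [] => []
  | none :: t => tagAux (c+1) t
  | some a :: t => (c, a) :: tagAux c t

theorem tagAux_append (c : ℕ) (u v : List (Option ℕ)) :
    tagAux c (u ++ v) = tagAux c u ++ tagAux (c + u.count none) v := by
  induction u generalizing c with
  | nil => simp [tagAux]
  | cons h t ih =>
    cases h with
    | none => simp [tagAux, ih, List.count_cons]; ring_nf
    | some a => simp [tagAux, ih, List.count_cons]

theorem mem_tagAux {c : ℕ} {u : List (Option ℕ)} {i a : ℕ} :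
    (i, a) ∈ tagAux c u → some a ∈ u := by
  induction u generalizing c with
  | nil => simp [tagAux]
  | cons h t ih =>
    cases h with
    | none => intro hm; exact List.mem_cons_of_mem _ (ih (c := c+1) (by simpa [tagAux] using hm))
    | some b =>
      intro hm
      rcases (by simpa [tagAux] using hm : (i,a) = (c,b) ∨ (i,a) ∈ tagAux c t) with h1 | h2
      · simp [Prod.ext_iff] at h1; simp [h1.2]
      · exact List.mem_cons_of_mem _ (ih h2)

def cnt (s : List (Option ℕ)) (i a : ℕ) : ℕ := (tagAux 0 s).count (i, a)

def lets (s : List (Option ℕ)) : Finset ℕ := (s.filterMap id).toFinset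

def J (s : List (Option ℕ)) : ZMod 2 :=
  ((((lets s).filter fun a => cnt s 0 a = 1 ∧ cnt s 1 a = 1).card : ℕ) : ZMod 2)

theorem notmem_tagAux {c : ℕ} {u : List (Option ℕ)} {i a : ℕ} (h : some a ∉ u) :
    (tagAux c u).count (i, a) = 0 :=
  List.count_eq_zero.mpr fun hm => h (mem_tagAux hm)

theorem J_h3 (A B C : ℕ) (w x y z : List (Option ℕ)) :
    J (w ++ some A :: some B :: (x ++ some A :: some C :: (y ++ some B :: some C :: z)))
    = J (w ++ some B :: some A :: (x ++ some C :: some A :: (y ++ some C :: some B :: z))) := by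
  have hc : ∀ i a, cnt (w ++ some A :: some B :: (x ++ some A :: some C :: (y ++ some B :: some C :: z))) i a
      = cnt (w ++ some B :: some A :: (x ++ some C :: some A :: (y ++ some C :: some B :: z))) i a := by
    intro i a
    simp [cnt, tagAux_append, tagAux, List.count_append, List.count_cons]
    ring
  have hl : lets (w ++ some A :: some B :: (x ++ some A :: some C :: (y ++ some B :: some C :: z)))
      = lets (w ++ some B :: some A :: (x ++ some C :: some A :: (y ++ some C :: some B :: z))) := by
    ext a
    simp [lets]
    tauto
  unfold J
  rw [hl]
  congr 2
  ext a
  simp [hc]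

theorem J_h2 (A B : ℕ) (x y z : List (Option ℕ)) (hAB : A ≠ B)
    (hA : some A ∉ x ++ y ++ z) (hB : some B ∉ x ++ y ++ z) :
    J (x ++ some A :: some B :: (y ++ some B :: some A :: z)) = J (x ++ y ++ z) := by
  simp only [List.mem_append, not_or] at hA hB
  obtain ⟨⟨hAx, hAy⟩, hAz⟩ := hA
  obtain ⟨⟨hBx, hBy⟩, hBz⟩ := hB
  set s := x ++ some A :: some B :: (y ++ some B :: some A :: z) with hs
  set s' := x ++ y ++ z with hs'
  set nx := x.count none with hnx
  set ny := y.count none with hny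
  have tagS : tagAux 0 s = tagAux 0 x ++ (nx, A) :: (nx, B) ::
      (tagAux nx y ++ (nx + ny, B) :: (nx + ny, A) :: tagAux (nx + ny) z) := by
    rw [hs, tagAux_append]
    simp [tagAux, tagAux_append]
    exact ⟨rfl, rfl⟩
  have tagS' : tagAux 0 s' = tagAux 0 x ++ (tagAux nx y ++ tagAux (nx + ny) z) := by
    rw [hs', List.append_assoc, tagAux_append, tagAux_append]
    simp
    rfl
  -- counts of letters other than A, B agree
  have ccnt : ∀ i a, a ≠ A → a ≠ B → cnt s i a = cnt s' i a := by
    intro i a ha hb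
    simp [cnt, tagS, tagS', List.count_append, List.count_cons, Prod.ext_iff, ha, hb, Ne.symm ha, Ne.symm hb]
  have cA : ∀ i, cnt s i A = (if i = nx then 1 else 0) + (if i = nx + ny then 1 else 0) := by
    intro i
    by_cases h1 : i = nx <;> by_cases h2 : i = nx + ny <;>
      simp [cnt, tagS, List.count_append, List.count_cons, Prod.ext_iff,
        notmem_tagAux hAx, notmem_tagAux hAy, notmem_tagAux hAz, hAB, Ne.symm hAB, h1, h2] <;>
      omega
  have cB : ∀ i, cnt s i B = (if i = nx then 1 else 0) + (if i = nx + ny then 1 else 0) := by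
    intro i
    by_cases h1 : i = nx <;> by_cases h2 : i = nx + ny <;>
      simp [cnt, tagS, List.count_append, List.count_cons, Prod.ext_iff,
        notmem_tagAux hBx, notmem_tagAux hBy, notmem_tagAux hBz, hAB, Ne.symm hAB, h1, h2] <;>
      omega
  have memA : A ∈ lets s := by simp [lets, hs]
  have memB : B ∈ lets s := by simp [lets, hs]
  have nmemA : A ∉ lets s' := by
    simp only [lets, hs', List.mem_toFinset, List.mem_filterMap, id]
    rintro ⟨o, ho, rfl⟩
    simp only [List.mem_append] at ho
    rcases ho with (h | h) | h
    exacts [hAx h, hAy h, hAz h]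
  have nmemB : B ∉ lets s' := by
    simp only [lets, hs', List.mem_toFinset, List.mem_filterMap, id]
    rintro ⟨o, ho, rfl⟩
    simp only [List.mem_append] at ho
    rcases ho with (h | h) | h
    exacts [hBx h, hBy h, hBz h]
  have memiff : ∀ a, a ≠ A → a ≠ B → (a ∈ lets s ↔ a ∈ lets s') := by
    intro a ha hb
    simp [lets, hs, hs', ha, hb]
    try tauto
  set F' := (lets s').filter fun a => cnt s' 0 a = 1 ∧ cnt s' 1 a = 1 with hF'
  by_cases hcond : ((if 0 = nx then 1 else 0) + (if 0 = nx + ny then 1 else 0) = 1)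
      ∧ ((if 1 = nx then 1 else 0) + (if 1 = nx + ny then 1 else 0) = 1)
  · have key : ((lets s).filter fun a => cnt s 0 a = 1 ∧ cnt s 1 a = 1)
        = insert A (insert B F') := by
      ext a
      by_cases ha : a = A
      · subst ha
        simp [Finset.mem_filter, memA, cA, hcond]
      · by_cases hb : a = B
        · subst hb
          simp [Finset.mem_filter, memB, cB, hcond, ha]
        · simp [Finset.mem_filter, memiff a ha hb, ccnt _ a ha hb, ha, hb, hF']
    have nB' : B ∉ F' := fun h => nmemB (Finset.mem_filter.mp h).1
    have nA' : A ∉ insert B F' := by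
      simp only [Finset.mem_insert, not_or]
      exact ⟨hAB, fun h => nmemA (Finset.mem_filter.mp h).1⟩
    unfold J
    rw [key, Finset.card_insert_of_notMem nA', Finset.card_insert_of_notMem nB']
    push_cast
    have h2 : ((F'.card : ZMod 2) + 1 + 1) = F'.card + 2 := by ring
    rw [h2, show ((2:ZMod 2) = 0) from rfl, add_zero]
  · have key : ((lets s).filter fun a => cnt s 0 a = 1 ∧ cnt s 1 a = 1) = F' := by
      ext a
      by_cases ha : a = A
      · subst ha
        simp [Finset.mem_filter, cA, hcond, nmemA, hF']
      · by_cases hb : a = B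
        · subst hb
          simp [Finset.mem_filter, cB, hcond, nmemB, hF']
        · simp [Finset.mem_filter, memiff a ha hb, ccnt _ a ha hb, hF']
    unfold J
    rw [key]

theorem J_h1 (A : ℕ) (x y : List (Option ℕ)) (hA : some A ∉ x ++ y) :
    J (x ++ some A :: some A :: y) = J (x ++ y) := by
  simp only [List.mem_append, not_or] at hA
  obtain ⟨hx, hy⟩ := hA
  have tagS : tagAux 0 (x ++ some A :: some A :: y)
      = tagAux 0 x ++ ((x.count none, A) :: (x.count none, A) :: tagAux (x.count none) y) := by
    rw [tagAux_append]; simp [tagAux]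
  have tagS' : tagAux 0 (x ++ y) = tagAux 0 x ++ tagAux (x.count none) y := by
    rw [tagAux_append]; simp
  have hfilt : ((lets (x ++ some A :: some A :: y)).filter
        fun a => cnt (x ++ some A :: some A :: y) 0 a = 1 ∧ cnt (x ++ some A :: some A :: y) 1 a = 1)
      = ((lets (x ++ y)).filter fun a => cnt (x ++ y) 0 a = 1 ∧ cnt (x ++ y) 1 a = 1) := by
    ext a
    by_cases haA : a = A
    · subst haA
      have c1 : ∀ i, cnt (x ++ some a :: some a :: y) i a =
          if i = x.count none then 2 else 0 := by
        intro i
        by_cases h : i = x.count none <;>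
          simp [cnt, tagS, List.count_append, List.count_cons,
            notmem_tagAux hx, notmem_tagAux hy, h, Prod.ext_iff] <;> omega
      have hnot : a ∉ lets (x ++ y) := by
        simp only [lets, List.mem_toFinset, List.mem_filterMap, id] at *
        rintro ⟨o, ho, rfl⟩
        rcases List.mem_append.mp ho with h | h
        · exact hx h
        · exact hy h
      simp only [Finset.mem_filter, hnot, false_and, iff_false, not_and]
      intro _ h0
      rw [c1 0] at h0
      split at h0 <;> omega
    · have clets : a ∈ lets (x ++ some A :: some A :: y) ↔ a ∈ lets (x ++ y) := by
        simp [lets, List.mem_filterMap, haA]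
      have ccnt : ∀ i, cnt (x ++ some A :: some A :: y) i a = cnt (x ++ y) i a := by
        intro i
        simp [cnt, tagS, tagS', List.count_append, List.count_cons, Prod.ext_iff, haA, Ne.symm haA]
      simp [Finset.mem_filter, clets, ccnt]
  unfold J
  rw [hfilt]

theorem tagAux_map_some (c : ℕ) (w : List ℕ) :
    tagAux c (w.map some) = w.map fun a => (c, a) := by
  induction w with
  | nil => rfl
  | cons h t ih => simp [tagAux, ih]

theorem count_map_pair (c i a : ℕ) (w : List ℕ) :
    ((w.map fun b => (c, b)).count (i, a)) = if i = c then w.count a else 0 := by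
  induction w with
  | nil => simp
  | cons h t ih =>
    simp only [List.map_cons, List.count_cons, ih]
    by_cases hic : i = c
    · subst hic
      by_cases hah : a = h <;> simp [hah, Prod.ext_iff]
    · simp [Prod.ext_iff, hic, Ne.symm hic]

theorem sepWord3 (p : Phrase 3) : sepWord p =
    (p 0).map some ++ none :: ((p 1).map some ++ none :: (p 2).map some) := by
  simp [sepWord, List.intercalate, List.ofFn_succ, List.intersperse]

theorem count_none_map_some (w : List ℕ) : (w.map some).count none = 0 := by
  simp [List.count_eq_zero]

theorem tag_sepWord3 (p : Phrase 3) :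
    tagAux 0 (sepWord p) = (p 0).map (fun a => (0, a)) ++
      ((p 1).map (fun a => (1, a)) ++ (p 2).map (fun a => (2, a))) := by
  rw [sepWord3, tagAux_append]
  simp [tagAux, tagAux_append, tagAux_map_some, count_none_map_some]

theorem cnt_sepWord0 (p : Phrase 3) (a : ℕ) : cnt (sepWord p) 0 a = (p 0).count a := by
  simp [cnt, tag_sepWord3, List.count_append, count_map_pair]
theorem cnt_sepWord1 (p : Phrase 3) (a : ℕ) : cnt (sepWord p) 1 a = (p 1).count a := by
  simp [cnt, tag_sepWord3, List.count_append, count_map_pair]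

theorem totalWord3 (p : Phrase 3) : totalWord p = p 0 ++ (p 1 ++ (p 2 ++ [])) := by
  simp [totalWord, List.ofFn_succ]

theorem lets_sepWord (p : Phrase 3) : lets (sepWord p) = (totalWord p).toFinset := by
  ext a
  simp [lets, sepWord3, totalWord3]

theorem Jlink (p : Phrase 3) : linkingMatrix p 0 1 = J (sepWord p) := by
  have h01 : ((0 : Fin 3) = 1) = False := by simp
  unfold linkingMatrix J
  rw [Matrix.of_apply]
  rw [lets_sepWord]
  simp only [h01, if_false]
  congr 2
  apply Finset.filter_congr
  intro a _
  rw [cnt_sepWord0, cnt_sepWord1]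

theorem list_toFinset_map (l : List ℕ) (f : ℕ → ℕ) :
    (l.map f).toFinset = l.toFinset.image f := by
  ext b; simp

theorem totalWord_map {n : ℕ} (p : Phrase n) (f : ℕ → ℕ) :
    totalWord (fun i => (p i).map f) = (totalWord p).map f := by
  simp [totalWord, List.map_flatten, List.map_ofFn, Function.comp_def]

theorem link_iso {n : ℕ} (p : Phrase n) (f : ℕ → ℕ) (hf : Function.Bijective f)
    (i j : Fin n) :
    linkingMatrix (fun i => (p i).map f) i j = linkingMatrix p i j := by
  unfold linkingMatrix
  rw [Matrix.of_apply, Matrix.of_apply]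
  by_cases hij : i = j
  · simp [hij]
  · simp only [hij, if_false]
    congr 1
    rw [totalWord_map, list_toFinset_map, Finset.filter_image,
      Finset.card_image_of_injective _ hf.1]
    congr 1
    apply Finset.filter_congr
    intro a _
    simp [List.count_map_of_injective _ f hf.1]

theorem count_update {n : ℕ} (p : Phrase n) (k : Fin n) (A : ℕ) (y : Word)
    (hp : p k = A :: y) (i : Fin n) (a : ℕ) :
    ((Function.update p k (y ++ [A])) i).count a = (p i).count a := by
  by_cases hik : i = k
  · subst hik
    rw [Function.update_self, hp]
    simp [List.count_append, List.count_cons]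
  · rw [Function.update_of_ne hik]

theorem link_shift {n : ℕ} (p : Phrase n) (k : Fin n) (A : ℕ) (y : Word)
    (hp : p k = A :: y) (i j : Fin n) :
    linkingMatrix (Function.update p k (y ++ [A])) i j = linkingMatrix p i j := by
  have hmem : ∀ (q : Phrase n) (a : ℕ), a ∈ totalWord q ↔ ∃ i, 0 < (q i).count a := by
    intro q a
    simp only [totalWord, List.mem_flatten, List.mem_ofFn]
    constructor
    · rintro ⟨l, ⟨i, rfl⟩, h⟩; exact ⟨i, List.count_pos_iff.mpr h⟩
    · rintro ⟨i, h⟩; exact ⟨q i, ⟨i, rfl⟩, List.count_pos_iff.mp h⟩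
  have htf : (totalWord (Function.update p k (y ++ [A]))).toFinset = (totalWord p).toFinset := by
    ext a
    simp only [List.mem_toFinset, hmem, count_update p k A y hp]
  unfold linkingMatrix
  rw [Matrix.of_apply, Matrix.of_apply, htf]
  by_cases hij : i = j
  · simp [hij]
  · simp only [hij, if_false]
    congr 2
    apply Finset.filter_congr
    intro a _
    rw [count_update p k A y hp, count_update p k A y hp]

/-- the Gauss phrases `∅|∅|∅` and `AB|AC|BC` (letters `A,B,C` encoded as
`0,1,2`) are not homotopic. -/
theorem trivial_not_homotopic_to_ABACBC :
    ¬ Homotopic (![[], [], []] : Phrase 3) (![[0, 1], [0, 2], [1, 2]] : Phrase 3) := by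

  intro h
  have key : ∀ {p q : Phrase 3}, Homotopic p q → linkingMatrix p 0 1 = linkingMatrix q 0 1 := by
    intro p q h
    have h' : Relation.EqvGen (fun a b => OpenMove a b ∨ ShiftMove a b) p q := h
    clear h
    induction h' with
    | rel p q hr =>
      rcases hr with hr | hr
      · cases hr with
        | iso f hf => exact (link_iso p f hf 0 1).symm
        | h1 q A x y hA hp hq =>
            rw [Jlink p, Jlink q, hp, hq]; exact J_h1 A x y hA
        | h2 q A B x y z hAB hA hB hp hq =>
            rw [Jlink p, Jlink q, hp, hq]; exact J_h2 A B x y z hAB hA hB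
        | h3 q A B C w x y z hAB hAC hBC hA hB hC hp hq =>
            rw [Jlink p, Jlink q, hp, hq]; exact J_h3 A B C w x y z
      · cases hr with
        | shift k A y hp => exact (link_shift p k A y hp 0 1).symm
    | refl p => rfl
    | symm _ _ _ ih => exact ih.symm
    | trans _ _ _ _ _ ih1 ih2 => exact ih1.trans ih2
  have h0 : linkingMatrix (![[], [], []] : Phrase 3) 0 1 = 0 := by decide
  have h1 : linkingMatrix (![[0, 1], [0, 2], [1, 2]] : Phrase 3) 0 1 = 1 := by decide
  have hk := key h
  rw [h0, h1] at hk
  exact absurd hk (by decide)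
end
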